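/- In any solved single-row cyclic puzzle with rotations, for each piece exactly two opposite edges of the piece are active (face left/right) and the other two are inactive (face top/bottom); consequently each piece contributes exactly one edge to the multigraph whose vertices are colors and whose edges join the two active colors of each piece, and the multigraph of a solved puzzle has an Eulerian circuit. -/

import Mathlib

/-- A piece is a 4-tuple of colors: (right, top, left, bottom). -/
abbrev Piece (C : Type*) := C × C × C × C

/-- A 90° rotation cyclically shifts the 4-tuple of edge colors. -/
def rotp {C : Type*} (p : Piece C) : Piece C := (p.2.1, p.2.2.1, p.2.2.2, p.1)

/-- A piece together with a chosen rotation, as actually placed. -/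
def place {C : Type*} (x : Piece C × Fin 4) : Piece C := rotp^[(x.2 : ℕ)] x.1

/-- An Eulerian trail in an undirected multigraph. -/
def IsEulerianTrail {V : Type*} (E : Multiset (Sym2 V)) (l : List (V × V)) : Prop :=
  (↑(l.map fun p => s(p.1, p.2)) : Multiset (Sym2 V)) = E ∧
    l.Chain' fun p q => p.2 = q.1

def HasEulerianCircuit {V : Type*} (E : Multiset (Sym2 V)) : Prop :=
  ∃ l : List (V × V), IsEulerianTrail E l ∧
    ∀ h : l ≠ [], (l.head h).1 = (l.getLast h).2

/-- In a solved cyclic single-row puzzle with rotations (pieces with chosen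
rotations, all adjacent vertical edges matching including the wrap-around pair):
for every piece the two active (horizontally facing) edges form one of its two
opposite pairs of edges, and the multigraph with one vertex per color and, for
each piece, one edge joining its two active colors has an Eulerian circuit. -/
theorem cyclic_solved_eulerian_circuit {C : Type*} (l : List (Piece C × Fin 4))
    (hchain : l.Chain' fun x y => (place x).1 = (place y).2.2.1)
    (hwrap : ∀ h : l ≠ [], (place (l.getLast h)).1 = (place (l.head h)).2.2.1) :
    (∀ x ∈ l,
        s((place x).2.2.1, (place x).1) = s(x.1.2.2.1, x.1.1) ∨
        s((place x).2.2.1, (place x).1) = s(x.1.2.1, x.1.2.2.2)) ∧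
    HasEulerianCircuit
      (↑(l.map fun x => s((place x).2.2.1, (place x).1)) : Multiset (Sym2 C)) := by
  constructor
  · rintro ⟨⟨a, b, c, d⟩, r⟩ hx
    fin_cases r <;>
      simp [place, rotp, Function.iterate_succ, Function.comp, Sym2.eq_swap]
  · refine ⟨l.map (fun x => ((place x).2.2.1, (place x).1)), ⟨?_, ?_⟩, ?_⟩
    · rw [List.map_map]; rfl
    · exact (List.isChain_map _).mpr hchain
    · intro h
      have h' : l ≠ [] := by simpa using h
      rw [List.head_map, List.getLast_map]
      exact (hwrap h').symm
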